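/- Assume the primal–dual setup with 2α ≥ β. Let δ > 0, 1 ≤ k ≤ n, and let x^t, x^{t+1} ∈ ℝ^d, y^{t−1}, y^t ∈ ℝ^n and I ⊆ {1,…,n} with |I| = k satisfy: y^t_i = y^{t−1}_i for i ∉ I; y^t_i − y^{t−1}_i = δ((1/n)(A x^t)_i − (∇φ(y^t))_i) for i ∈ I; and ∇D(y^t) = (1/n)A x̄^t − ∇φ(y^t), where x̄^t ∈ C attains D(y^t) = L(x̄^t, y^t). Define Δ_d^t = D* − D(y^t), Δ_d^{t−1} = D* − D(y^{t−1}), Δ_p^t = L(x^{t+1}, y^t) − D(y^t), and Δ_p^{t−1} = L(x^t, y^{t−1}) − D(y^{t−1}). Then Δ_d^t − Δ_d^{t−1} + Δ_p^t − Δ_p^{t−1} ≤ (L(x^{t+1}, y^t) − L(x^t, y^t)) − (1/(2δ))‖y^t − y^{t−1}‖² + (2δRk/n²)‖x̄^t − x^t‖². -/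

import Mathlib

open RealInnerProductSpace

lemma descent_aux {m : ℕ} (φ : EuclideanSpace ℝ (Fin m) → ℝ)
    (φ' : EuclideanSpace ℝ (Fin m) → EuclideanSpace ℝ (Fin m)) (α : ℝ) (hα : 0 < α)
    (hdiff : ∀ y, HasGradientAt φ (φ' y) y)
    (hlip : ∀ u v, ‖φ' u - φ' v‖ ≤ (1 / α) * ‖u - v‖)
    (u v : EuclideanSpace ℝ (Fin m)) :
    φ v ≤ φ u + ⟪φ' u, v - u⟫ + 1 / (2 * α) * ‖v - u‖ ^ 2 := by
  set w := v - u with hw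
  have hline : ∀ t : ℝ, HasDerivAt (fun t : ℝ => u + t • w) w t := by
    intro t
    simpa using ((hasDerivAt_id t).smul_const w).const_add u
  have hcomp : ∀ t : ℝ, HasDerivAt (fun t : ℝ => φ (u + t • w)) ⟪φ' (u + t • w), w⟫ t := by
    intro t
    have h1 := (hdiff (u + t • w)).hasFDerivAt.comp_hasDerivAt t (hline t)
    simp only [InnerProductSpace.toDual_apply_apply] at h1
    exact h1
  set c : ℝ := (1 / α) * ‖w‖ ^ 2 with hc
  set F : ℝ → ℝ := fun t => φ (u + t • w) - t * ⟪φ' u, w⟫ - t ^ 2 / 2 * c with hF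
  have hFd : ∀ t : ℝ, HasDerivAt F (⟪φ' (u + t • w), w⟫ - ⟪φ' u, w⟫ - t * c) t := by
    intro t
    have h2 : HasDerivAt (fun t : ℝ => t * ⟪φ' u, w⟫) ⟪φ' u, w⟫ t := by
      simpa using (hasDerivAt_id t).mul_const (⟪φ' u, w⟫ : ℝ)
    have h3 : HasDerivAt (fun t : ℝ => t ^ 2 / 2 * c) (t * c) t := by
      have := ((hasDerivAt_pow 2 t).div_const 2).mul_const c
      simpa [mul_comm, mul_assoc] using this
    exact ((hcomp t).sub h2).sub h3
  have hder_le : ∀ t ∈ interior (Set.Icc (0:ℝ) 1), deriv F t ≤ 0 := by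
    intro t ht
    rw [interior_Icc] at ht
    rw [(hFd t).deriv]
    have h1 : ⟪φ' (u + t • w) - φ' u, w⟫ ≤ ‖φ' (u + t • w) - φ' u‖ * ‖w‖ :=
      real_inner_le_norm _ _
    have h2 : ‖φ' (u + t • w) - φ' u‖ ≤ (1 / α) * ‖(u + t • w) - u‖ := hlip _ _
    have h3 : ‖(u + t • w) - u‖ = t * ‖w‖ := by
      simp [norm_smul, abs_of_pos ht.1]
    rw [inner_sub_left] at h1
    rw [h3] at h2
    have h4 : ‖φ' (u + t • w) - φ' u‖ * ‖w‖ ≤ (1 / α) * (t * ‖w‖) * ‖w‖ := by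
      nlinarith [norm_nonneg w]
    have : t * c = (1 / α) * (t * ‖w‖) * ‖w‖ := by rw [hc]; ring
    linarith
  have hanti : AntitoneOn F (Set.Icc 0 1) :=
    antitoneOn_of_deriv_nonpos (convex_Icc 0 1)
      (fun t _ => (hFd t).continuousAt.continuousWithinAt)
      (fun t ht => (hFd t).differentiableAt.differentiableWithinAt) hder_le
  have key : F 1 ≤ F 0 :=
    hanti (Set.left_mem_Icc.2 zero_le_one) (Set.right_mem_Icc.2 zero_le_one) zero_le_one
  have hF0 : F 0 = φ u := by simp [hF]
  have hF1 : F 1 = φ v - ⟪φ' u, w⟫ - 1 / 2 * c := by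
    simp [hF, hw]
  rw [hF0, hF1] at key
  have : 1 / (2 * α) * ‖v - u‖ ^ 2 = 1 / 2 * c := by
    rw [hc, hw]; field_simp
  linarith

theorem stmt_9 {n d : ℕ} (a : Fin n → EuclideanSpace ℝ (Fin d)) (R : ℝ)
    (hR : ∀ i, ‖a i‖ ^ 2 ≤ R)
    (g : EuclideanSpace ℝ (Fin d) → ℝ)
    (g' : EuclideanSpace ℝ (Fin d) → EuclideanSpace ℝ (Fin d))
    (μ L : ℝ) (hμ : 0 < μ) (hμL : μ ≤ L)
    (hgdiff : ∀ x, HasGradientAt g (g' x) x)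
    (hgsc : ∀ u v, g u + ⟪g' u, v - u⟫ + μ / 2 * ‖v - u‖ ^ 2 ≤ g v)
    (hgsm : ∀ u v, g v ≤ g u + ⟪g' u, v - u⟫ + L / 2 * ‖v - u‖ ^ 2)
    (φ : EuclideanSpace ℝ (Fin n) → ℝ)
    (φ' : EuclideanSpace ℝ (Fin n) → EuclideanSpace ℝ (Fin n))
    (α : ℝ) (hα : 0 < α)
    (hφdiff : ∀ y, HasGradientAt φ (φ' y) y)
    (hφconv : ConvexOn ℝ Set.univ φ)
    (hφlip : ∀ u v, ‖φ' u - φ' v‖ ≤ (1 / α) * ‖u - v‖)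
    (Lag : EuclideanSpace ℝ (Fin d) → EuclideanSpace ℝ (Fin n) → ℝ)
    (hLag : ∀ x y, Lag x y = g x + (1 / n : ℝ) * (∑ i, y i * ⟪a i, x⟫) - φ y)
    (C : Set (EuclideanSpace ℝ (Fin d)))
    (hCne : C.Nonempty) (hCcl : IsClosed C) (hCconv : Convex ℝ C)
    (D : EuclideanSpace ℝ (Fin n) → ℝ)
    (hD : ∀ y, IsLeast ((fun x => Lag x y) '' C) (D y))
    (D' : EuclideanSpace ℝ (Fin n) → EuclideanSpace ℝ (Fin n))
    (β : ℝ) (hβ : 0 < β)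
    (hDdiff : ∀ y, HasGradientAt D (D' y) y)
    (hDsc : ∀ u v, (-D u) + ⟪-D' u, v - u⟫ + (1 / β) / 2 * ‖v - u‖ ^ 2 ≤ -D v)
    (Dstar : ℝ) (hDub : ∀ y, D y ≤ Dstar) (hDatt : ∃ y, D y = Dstar)
    -- 2α ≥ β
    (hαβ : β ≤ 2 * α)
    (δ : ℝ) (hδ : 0 < δ) (k : ℕ) (hk1 : 1 ≤ k) (hkn : k ≤ n)
    (xt xnext : EuclideanSpace ℝ (Fin d))
    (yprev yt : EuclideanSpace ℝ (Fin n))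
    (I : Finset (Fin n)) (hI : I.card = k)
    (hout : ∀ i ∉ I, yt i = yprev i)
    (hin : ∀ i ∈ I, yt i - yprev i = δ * ((1 / n : ℝ) * ⟪a i, xt⟫ - φ' yt i))
    (xbar : EuclideanSpace ℝ (Fin d)) (hxbarC : xbar ∈ C)
    (hxbarD : D yt = Lag xbar yt)
    (hgradD : ∀ i, D' yt i = (1 / n : ℝ) * ⟪a i, xbar⟫ - φ' yt i) :
    ((Dstar - D yt) - (Dstar - D yprev)) +
        ((Lag xnext yt - D yt) - (Lag xt yprev - D yprev)) ≤
      (Lag xnext yt - Lag xt yt) - (1 / (2 * δ)) * ‖yt - yprev‖ ^ 2 +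
        (2 * δ * R * k / n ^ 2 : ℝ) * ‖xbar - xt‖ ^ 2 := by
  have hn : 0 < n := lt_of_lt_of_le hk1 hkn
  have hnR : (0:ℝ) < n := by exact_mod_cast hn
  have hδ' : δ ≠ 0 := ne_of_gt hδ
  set r : Fin n → ℝ := fun i => (1 / n : ℝ) * ⟪a i, xbar - xt⟫ with hr
  -- norm squared as a sum over I
  have hnormsq : ‖yt - yprev‖ ^ 2 = ∑ i ∈ I, (yt i - yprev i) ^ 2 := by
    have h1 : ‖yt - yprev‖ ^ 2 = ∑ i, (yt i - yprev i) ^ 2 := by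
      rw [← real_inner_self_eq_norm_sq, PiLp.inner_apply]
      apply Finset.sum_congr rfl
      intro i _
      simp [sq]
    rw [h1]
    exact (Finset.sum_subset I.subset_univ
      (fun i _ hi => by rw [hout i hi]; ring)).symm
  -- inner product against the difference as a sum over I
  have hinnersum : ∀ z : EuclideanSpace ℝ (Fin n),
      ⟪z, yt - yprev⟫ = ∑ i ∈ I, z i * (yt i - yprev i) := by
    intro z
    rw [PiLp.inner_apply]
    have h1 : ∀ i ∈ Finset.univ, (inner ℝ (z i) ((yt - yprev) i) : ℝ) = z i * (yt i - yprev i) := by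
      intro i _
      have h2 : (yt - yprev) i = yt i - yprev i := rfl
      rw [h2]
      simp [real_inner_comm, mul_comm]
    rw [Finset.sum_congr rfl h1]
    exact (Finset.sum_subset I.subset_univ
      (fun i _ hi => by rw [hout i hi]; ring)).symm
  -- strong concavity of D
  have hDineq : D yprev ≤ D yt - ⟪D' yt, yt - yprev⟫ - (1 / β) / 2 * ‖yt - yprev‖ ^ 2 := by
    have h := hDsc yt yprev
    have e1 : ⟪-D' yt, yprev - yt⟫ = ⟪D' yt, yt - yprev⟫ := by
      rw [← neg_sub yt yprev, inner_neg_neg]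
    have e2 : ‖yprev - yt‖ = ‖yt - yprev‖ := norm_sub_rev _ _
    rw [e1, e2] at h
    linarith
  -- descent lemma for φ
  have hφineq : φ yprev ≤ φ yt - ⟪φ' yt, yt - yprev⟫ + 1 / (2 * α) * ‖yt - yprev‖ ^ 2 := by
    have h := descent_aux φ φ' α hα hφdiff hφlip yt yprev
    have e1 : ⟪φ' yt, yprev - yt⟫ = -⟪φ' yt, yt - yprev⟫ := by
      rw [← neg_sub yt yprev, inner_neg_right]
    have e2 : ‖yprev - yt‖ = ‖yt - yprev‖ := norm_sub_rev _ _
    rw [e1, e2] at h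
    linarith
  -- Lagrangian difference
  have hLdiff : Lag xt yt - Lag xt yprev =
      (1 / n : ℝ) * ∑ i ∈ I, (yt i - yprev i) * ⟪a i, xt⟫ - (φ yt - φ yprev) := by
    rw [hLag xt yt, hLag xt yprev]
    have h1 : ∑ i, yt i * ⟪a i, xt⟫ - ∑ i, yprev i * ⟪a i, xt⟫
        = ∑ i ∈ I, (yt i - yprev i) * ⟪a i, xt⟫ := by
      rw [← Finset.sum_sub_distrib]
      rw [Finset.sum_congr rfl (fun i _ => by ring :
        ∀ i ∈ Finset.univ, yt i * ⟪a i, xt⟫ - yprev i * ⟪a i, xt⟫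
          = (yt i - yprev i) * ⟪a i, xt⟫)]
      exact (Finset.sum_subset I.subset_univ
        (fun i _ hi => by rw [hout i hi]; ring)).symm
    rw [← h1]
    ring
  -- key coordinatewise identities
  have hpi : ∀ i ∈ I, (1 / n : ℝ) * ⟪a i, xt⟫ - φ' yt i = (yt i - yprev i) / δ := by
    intro i hi
    rw [hin i hi]
    field_simp
  have hDsum : ∑ i ∈ I, D' yt i * (yt i - yprev i)
      = (∑ i ∈ I, (yt i - yprev i) ^ 2) / δ + ∑ i ∈ I, r i * (yt i - yprev i) := by
    rw [Finset.sum_div, ← Finset.sum_add_distrib]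
    apply Finset.sum_congr rfl
    intro i hi
    rw [hgradD i]
    have hri : r i = (1 / n : ℝ) * ⟪a i, xbar⟫ - (1 / n : ℝ) * ⟪a i, xt⟫ := by
      rw [hr]
      simp only [inner_sub_right]
      ring
    have hp := hpi i hi
    have : (1 / n : ℝ) * ⟪a i, xbar⟫ - φ' yt i
        = (yt i - yprev i) / δ + r i := by
      rw [hri]
      linarith
    rw [this]
    ring
  have hLsum : (1 / n : ℝ) * ∑ i ∈ I, (yt i - yprev i) * ⟪a i, xt⟫
      - ∑ i ∈ I, φ' yt i * (yt i - yprev i)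
      = (∑ i ∈ I, (yt i - yprev i) ^ 2) / δ := by
    rw [Finset.mul_sum, ← Finset.sum_sub_distrib, Finset.sum_div]
    apply Finset.sum_congr rfl
    intro i hi
    have hp := hpi i hi
    have : (1 / n : ℝ) * ((yt i - yprev i) * ⟪a i, xt⟫) - φ' yt i * (yt i - yprev i)
        = (yt i - yprev i) * ((1 / n : ℝ) * ⟪a i, xt⟫ - φ' yt i) := by ring
    rw [this, hp]
    ring
  -- Young's inequality sum
  have hyoung : -(2 * ∑ i ∈ I, r i * (yt i - yprev i))
      ≤ 1 / (2 * δ) * ∑ i ∈ I, (yt i - yprev i) ^ 2 + 2 * δ * ∑ i ∈ I, r i ^ 2 := by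
    have hterm : ∀ i ∈ I, 0 ≤ 1 / (2 * δ) * (yt i - yprev i) ^ 2 + 2 * δ * r i ^ 2
        + 2 * (r i * (yt i - yprev i)) := by
      intro i _
      have key : 0 ≤ 1 / (2 * δ) * ((yt i - yprev i) + 2 * δ * r i) ^ 2 := by positivity
      have expand : 1 / (2 * δ) * ((yt i - yprev i) + 2 * δ * r i) ^ 2
          = 1 / (2 * δ) * (yt i - yprev i) ^ 2 + 2 * δ * r i ^ 2
            + 2 * (r i * (yt i - yprev i)) := by
        field_simp
        ring
      rw [expand] at key
      linarith
    have hsum := Finset.sum_nonneg hterm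
    rw [Finset.sum_add_distrib, Finset.sum_add_distrib, ← Finset.mul_sum,
      ← Finset.mul_sum, ← Finset.mul_sum] at hsum
    linarith
  -- Cauchy–Schwarz bound on the r i
  have hCS : ∑ i ∈ I, r i ^ 2 ≤ R * k / (n : ℝ) ^ 2 * ‖xbar - xt‖ ^ 2 := by
    have hr2 : ∀ i ∈ I, r i ^ 2 ≤ 1 / (n : ℝ) ^ 2 * (R * ‖xbar - xt‖ ^ 2) := by
      intro i _
      have h1 : ⟪a i, xbar - xt⟫ ^ 2 ≤ ‖a i‖ ^ 2 * ‖xbar - xt‖ ^ 2 := by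
        have h := real_inner_mul_inner_self_le (a i) (xbar - xt)
        rw [real_inner_self_eq_norm_mul_norm, real_inner_self_eq_norm_mul_norm] at h
        calc ⟪a i, xbar - xt⟫ ^ 2 = ⟪a i, xbar - xt⟫ * ⟪a i, xbar - xt⟫ := sq _
          _ ≤ ‖a i‖ * ‖a i‖ * (‖xbar - xt‖ * ‖xbar - xt‖) := h
          _ = ‖a i‖ ^ 2 * ‖xbar - xt‖ ^ 2 := by ring
      have h2 : ‖a i‖ ^ 2 * ‖xbar - xt‖ ^ 2 ≤ R * ‖xbar - xt‖ ^ 2 :=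
        mul_le_mul_of_nonneg_right (hR i) (sq_nonneg _)
      have h3 : r i ^ 2 = 1 / (n : ℝ) ^ 2 * ⟪a i, xbar - xt⟫ ^ 2 := by
        rw [hr]
        field_simp
      have h4 : (0:ℝ) ≤ 1 / (n : ℝ) ^ 2 := by positivity
      calc r i ^ 2 = 1 / (n : ℝ) ^ 2 * ⟪a i, xbar - xt⟫ ^ 2 := h3
        _ ≤ 1 / (n : ℝ) ^ 2 * (R * ‖xbar - xt‖ ^ 2) :=
            mul_le_mul_of_nonneg_left (le_trans h1 h2) h4
    calc ∑ i ∈ I, r i ^ 2 ≤ I.card • (1 / (n : ℝ) ^ 2 * (R * ‖xbar - xt‖ ^ 2)) :=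
          Finset.sum_le_card_nsmul I _ _ hr2
      _ = (k : ℝ) * (1 / (n : ℝ) ^ 2 * (R * ‖xbar - xt‖ ^ 2)) := by
          rw [hI, nsmul_eq_mul]
      _ = R * k / (n : ℝ) ^ 2 * ‖xbar - xt‖ ^ 2 := by ring
  -- assemble
  have hS0 : 0 ≤ ∑ i ∈ I, (yt i - yprev i) ^ 2 :=
    Finset.sum_nonneg fun i _ => sq_nonneg _
  have E1 : D yprev - D yt ≤ -((∑ i ∈ I, (yt i - yprev i) ^ 2) / δ
      + ∑ i ∈ I, r i * (yt i - yprev i))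
      - (1 / β) / 2 * ∑ i ∈ I, (yt i - yprev i) ^ 2 := by
    have h := hDineq
    rw [hinnersum (D' yt), hDsum, hnormsq] at h
    linarith
  have E2 : Lag xt yt - Lag xt yprev ≤ (∑ i ∈ I, (yt i - yprev i) ^ 2) / δ
      + 1 / (2 * α) * ∑ i ∈ I, (yt i - yprev i) ^ 2 := by
    have h := hφineq
    rw [hinnersum (φ' yt), hnormsq] at h
    rw [hLdiff]
    linarith [hLsum]
  have E6 : 1 / (2 * α) * ∑ i ∈ I, (yt i - yprev i) ^ 2
      ≤ 1 / β * ∑ i ∈ I, (yt i - yprev i) ^ 2 := by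
    have : 1 / (2 * α) ≤ 1 / β := one_div_le_one_div_of_le hβ hαβ
    exact mul_le_mul_of_nonneg_right this hS0
  have E3 : 2 * δ * ∑ i ∈ I, r i ^ 2
      ≤ 2 * δ * (R * k / (n : ℝ) ^ 2 * ‖xbar - xt‖ ^ 2) :=
    mul_le_mul_of_nonneg_left hCS (by positivity)
  rw [hnormsq]
  have hdd : (∑ i ∈ I, (yt i - yprev i) ^ 2) / δ
      = 2 * (1 / (2 * δ) * ∑ i ∈ I, (yt i - yprev i) ^ 2) := by
    field_simp
  have hcc : (2 * δ * R * k / (n : ℝ) ^ 2) * ‖xbar - xt‖ ^ 2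
      = 2 * δ * (R * k / (n : ℝ) ^ 2 * ‖xbar - xt‖ ^ 2) := by ring
  rw [hcc]
  linarith
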